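/- Let Γ be a simple graph on m vertices containing no complete subgraph on r+1 vertices (r ≥ 1). Then Γ has at most (1 - 1/r)·m²/2 edges. -/

import Mathlib

open Finset SimpleGraph

private lemma tb_deg (n r : ℕ) :
    ∀ v : Fin n, (turanGraph n r).degree v
      + #(univ.filter fun w : Fin n => (w:ℕ)%r = (v:ℕ)%r) = n := by
  intro v
  rw [← card_neighborFinset_eq_degree, neighborFinset_eq_filter]
  have : (univ.filter fun w => (turanGraph n r).Adj v w)
      = univ.filter fun w : Fin n => ¬ ((w:ℕ)%r = (v:ℕ)%r) := by
    apply filter_congr; intro w _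
    simp [turanGraph, ne_comm]
  rw [this, add_comm, card_filter_add_card_filter_not, Finset.card_univ,
    Fintype.card_fin]

private lemma tb_sum (n r : ℕ) :
    2 * #(turanGraph n r).edgeFinset
      + ∑ v : Fin n, #(univ.filter fun w : Fin n => (w:ℕ)%r = (v:ℕ)%r) = n * n := by
  rw [← sum_degrees_eq_twice_card_edges, ← Finset.sum_add_distrib]
  rw [Finset.sum_congr rfl fun v _ => tb_deg n r v]
  simp [Finset.card_univ, mul_comm]

private lemma tb_fib (n r : ℕ) :
    (∑ v : Fin n, #(univ.filter fun w : Fin n => (w:ℕ)%r = (v:ℕ)%r))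
      = ∑ i ∈ (univ : Finset (Fin n)).image (fun v : Fin n => (v:ℕ)%r),
          #(univ.filter fun w : Fin n => (w:ℕ)%r = i) ^ 2 := by
  rw [Finset.sum_comp (fun i => #(univ.filter fun w : Fin n => (w:ℕ)%r = i))
    (fun v : Fin n => (v:ℕ)%r)]
  simp [sq]

private lemma tb_cardsum (n r : ℕ) :
    ∑ i ∈ (univ : Finset (Fin n)).image (fun v : Fin n => (v:ℕ)%r),
      #(univ.filter fun w : Fin n => (w:ℕ)%r = i) = n := by
  rw [← Finset.card_eq_sum_card_image (fun v : Fin n => (v:ℕ)%r) univ,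
    Finset.card_univ, Fintype.card_fin]

private lemma tb_tcard (n r : ℕ) (hr : 1 ≤ r) :
    #((univ : Finset (Fin n)).image (fun v : Fin n => (v:ℕ)%r)) ≤ r := by
  have : ((univ : Finset (Fin n)).image (fun v : Fin n => (v:ℕ)%r)) ⊆ Finset.range r := ?_
  · exact (Finset.card_le_card this).trans (by simp)
  intro i hi
  simp only [Finset.mem_image] at hi
  obtain ⟨v, -, rfl⟩ := hi
  exact Finset.mem_range.2 (Nat.mod_lt _ hr)

private lemma tb_final (n r : ℕ) (hr : 1 ≤ r) (E : ℕ)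
    (t : Finset ℕ) (f : ℕ → ℕ)
    (hcardsum : ∑ i ∈ t, f i = n)
    (htcard : #t ≤ r)
    (hsum : 2 * E + ∑ i ∈ t, f i ^ 2 = n * n) :
    (E : ℝ) ≤ (1 - 1 / (r : ℝ)) * (n : ℝ) ^ 2 / 2 := by
  have hsumR : 2 * (E : ℝ) + ∑ i ∈ t, (f i : ℝ) ^ 2 = (n : ℝ) ^ 2 := by
    have := congrArg (Nat.cast (R := ℝ)) hsum
    push_cast at this
    rw [sq (n : ℝ)]; linarith
  have hcs : (n : ℝ) ^ 2 ≤ (r : ℝ) * ∑ i ∈ t, (f i : ℝ) ^ 2 := by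
    have h1 : ((n : ℝ)) ^ 2 = (∑ i ∈ t, (f i : ℝ)) ^ 2 := by
      rw [← Nat.cast_sum, hcardsum]
    rw [h1]
    calc (∑ i ∈ t, (f i : ℝ)) ^ 2 ≤ (#t : ℝ) * ∑ i ∈ t, (f i : ℝ) ^ 2 :=
          sq_sum_le_card_mul_sum_sq
      _ ≤ (r : ℝ) * ∑ i ∈ t, (f i : ℝ) ^ 2 := by
          apply mul_le_mul_of_nonneg_right (by exact_mod_cast htcard)
          positivity
  have hrpos : (0 : ℝ) < r := by exact_mod_cast hr
  have key : (n : ℝ) ^ 2 / r ≤ ∑ i ∈ t, (f i : ℝ) ^ 2 := by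
    rw [div_le_iff₀ hrpos]; nlinarith [hcs]
  rw [le_div_iff₀ (by norm_num : (0:ℝ) < 2)]
  calc (E : ℝ) * 2 = 2 * (E : ℝ) := by ring
    _ ≤ (n:ℝ)^2 - (n:ℝ)^2/r := by linarith
    _ = (1 - 1/(r:ℝ)) * (n:ℝ)^2 := by field_simp

private lemma tb_turanGraph (n r : ℕ) (hr : 1 ≤ r) :
    ((turanGraph n r).edgeFinset.card : ℝ) ≤ (1 - 1 / (r : ℝ)) * (n : ℝ) ^ 2 / 2 := by
  refine tb_final n r hr _ _ _ (tb_cardsum n r) (tb_tcard n r hr) ?_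
  rw [← tb_fib n r]
  exact tb_sum n r

theorem turan_bound {V : Type*} [Fintype V] [DecidableEq V]
    (Γ : SimpleGraph V) [DecidableRel Γ.Adj]
    (m r : ℕ) (hm : Fintype.card V = m) (hr : 1 ≤ r)
    (hfree : Γ.CliqueFree (r + 1)) :
    (Γ.edgeFinset.card : ℝ) ≤ (1 - 1 / (r : ℝ)) * (m : ℝ) ^ 2 / 2 := by
  classical
  subst hm
  obtain ⟨H, hd, hmax⟩ := SimpleGraph.exists_isTuranMaximal (V := V) hr
  have h1 : #Γ.edgeFinset ≤ #H.edgeFinset := hmax.2 hfree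
  obtain ⟨f⟩ := hmax.nonempty_iso_turanGraph
  have h2 : #H.edgeFinset = #(turanGraph (Fintype.card V) r).edgeFinset := by
    rw [SimpleGraph.edgeFinset_card, SimpleGraph.edgeFinset_card]
    exact Fintype.card_congr f.mapEdgeSet
  calc (#Γ.edgeFinset : ℝ) ≤ (#(turanGraph (Fintype.card V) r).edgeFinset : ℝ) := by
        exact_mod_cast h1.trans h2.le
    _ ≤ _ := tb_turanGraph _ r hr
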